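/- (Theorem 1(i).) Let Q, E ∈ ℝ^{n×n} and let x be a trajectory of the switched system. Then the cost function value J = ∫_0^{τ_{N+1}} x(t)ᵀ Q x(t) dt + x(τ_{N+1})ᵀ E x(τ_{N+1}) is the quadratic function of the initial state J = x_0ᵀ S_0 x_0. -/

import Mathlib

open Matrix

/-- Matrix exponential of a real square matrix. -/
noncomputable def expM {n : ℕ} (A : Matrix (Fin n) (Fin n) ℝ) : Matrix (Fin n) (Fin n) ℝ :=
  NormedSpace.exp A

/-- Switching times: `tau δ i = ∑_{j<i} δ j`. -/
noncomputable def tau (δ : ℕ → ℝ) (i : ℕ) : ℝ := ∑ j ∈ Finset.range i, δ j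

/-- State transition matrix `Φ(l, i) = exp(δ_{l-1} A_{l-1}) ⋯ exp(δ_i A_i)`
(ordered product, larger indices on the left; `Φ(i,i) = 1`). -/
noncomputable def Phi {n : ℕ} (A : ℕ → Matrix (Fin n) (Fin n) ℝ) (δ : ℕ → ℝ)
    (l i : ℕ) : Matrix (Fin n) (Fin n) ℝ :=
  (((List.range (l - i)).reverse).map (fun p => expM (δ (i + p) • A (i + p)))).prod

/-- `M_q = ∫_0^{δ_q} exp(η A_q)ᵀ Q exp(η A_q) dη`, taken entrywise. -/
noncomputable def Mmat {n : ℕ} (A : ℕ → Matrix (Fin n) (Fin n) ℝ) (δ : ℕ → ℝ)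
    (Q : Matrix (Fin n) (Fin n) ℝ) (q : ℕ) : Matrix (Fin n) (Fin n) ℝ :=
  Matrix.of fun k l => ∫ η in (0:ℝ)..δ q, ((expM (η • A q))ᵀ * Q * expM (η • A q)) k l

/-- `P_a = ∑_{q=a}^N Φ(q,a)ᵀ M_q Φ(q,a)`. -/
noncomputable def Pmat {n : ℕ} (N : ℕ) (A : ℕ → Matrix (Fin n) (Fin n) ℝ) (δ : ℕ → ℝ)
    (Q : Matrix (Fin n) (Fin n) ℝ) (a : ℕ) : Matrix (Fin n) (Fin n) ℝ :=
  ∑ q ∈ Finset.Icc a N, (Phi A δ q a)ᵀ * Mmat A δ Q q * Phi A δ q a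

/-- `F_a = Φ(N+1,a)ᵀ E Φ(N+1,a)`. -/
noncomputable def Fmat {n : ℕ} (N : ℕ) (A : ℕ → Matrix (Fin n) (Fin n) ℝ) (δ : ℕ → ℝ)
    (E : Matrix (Fin n) (Fin n) ℝ) (a : ℕ) : Matrix (Fin n) (Fin n) ℝ :=
  (Phi A δ (N + 1) a)ᵀ * E * Phi A δ (N + 1) a

/-- `S_a = P_a + F_a`. -/
noncomputable def Smat {n : ℕ} (N : ℕ) (A : ℕ → Matrix (Fin n) (Fin n) ℝ) (δ : ℕ → ℝ)
    (Q E : Matrix (Fin n) (Fin n) ℝ) (a : ℕ) : Matrix (Fin n) (Fin n) ℝ :=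
  Pmat N A δ Q a + Fmat N A δ E a

/-- A trajectory of the switched system: continuous on `[0, τ_{N+1}]`, starting at `x0`,
satisfying `x' = A_i x` on each open interval `(τ_i, τ_{i+1})`. -/
def IsTrajectory {n : ℕ} (N : ℕ) (A : ℕ → Matrix (Fin n) (Fin n) ℝ) (δ : ℕ → ℝ)
    (x0 : Fin n → ℝ) (x : ℝ → Fin n → ℝ) : Prop :=
  ContinuousOn x (Set.Icc 0 (tau δ (N + 1))) ∧ x 0 = x0 ∧
    ∀ i ≤ N, ∀ t ∈ Set.Ioo (tau δ i) (tau δ (i + 1)),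
      HasDerivAt x ((A i).mulVec (x t)) t

lemma expM_zero {n : ℕ} : expM (0 : Matrix (Fin n) (Fin n) ℝ) = 1 := by
  simp [expM, NormedSpace.exp_zero]

lemma continuous_expM {n : ℕ} : Continuous (expM (n := n)) := by
  letI : SeminormedRing (Matrix (Fin n) (Fin n) ℝ) := Matrix.linftyOpSemiNormedRing
  letI : NormedRing (Matrix (Fin n) (Fin n) ℝ) := Matrix.linftyOpNormedRing
  letI : NormedAlgebra ℝ (Matrix (Fin n) (Fin n) ℝ) := Matrix.linftyOpNormedAlgebra
  letI : NormedAlgebra ℚ (Matrix (Fin n) (Fin n) ℝ) := .restrictScalars ℚ ℝ _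
  exact NormedSpace.exp_continuous (𝔸 := Matrix (Fin n) (Fin n) ℝ)

noncomputable def mulVecCLM {n : ℕ} (v : Fin n → ℝ) :
    Matrix (Fin n) (Fin n) ℝ →ₗ[ℝ] (Fin n → ℝ) where
  toFun M := M.mulVec v
  map_add' M N := Matrix.add_mulVec M N v
  map_smul' c M := by simp [Matrix.smul_mulVec]

lemma hasDerivAt_expM_mulVec {n : ℕ} (A : Matrix (Fin n) (Fin n) ℝ) (v : Fin n → ℝ)
    (c t : ℝ) :
    HasDerivAt (fun s : ℝ => (expM ((s - c) • A)).mulVec v)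
      (A.mulVec ((expM ((t - c) • A)).mulVec v)) t := by
  letI : SeminormedRing (Matrix (Fin n) (Fin n) ℝ) := Matrix.linftyOpSemiNormedRing
  letI : NormedRing (Matrix (Fin n) (Fin n) ℝ) := Matrix.linftyOpNormedRing
  letI : NormedAlgebra ℝ (Matrix (Fin n) (Fin n) ℝ) := Matrix.linftyOpNormedAlgebra
  have h0 : HasDerivAt (fun u : ℝ => NormedSpace.exp (u • A))
      (A * NormedSpace.exp ((t - c) • A)) (t - c) := hasDerivAt_exp_smul_const' A (t - c)
  have h1 : HasDerivAt (fun s : ℝ => NormedSpace.exp ((s - c) • A))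
      (A * NormedSpace.exp ((t - c) • A)) t := by
    have hs : HasDerivAt (fun s : ℝ => s - c) 1 t := (hasDerivAt_id t).sub_const c
    have h := h0.scomp t hs; rw [one_smul] at h; exact h
  have h2 := (LinearMap.toContinuousLinearMap (mulVecCLM v)).hasFDerivAt.comp_hasDerivAt t h1
  have h3 : HasDerivAt (fun s : ℝ => (expM ((s - c) • A)).mulVec v)
      ((A * NormedSpace.exp ((t - c) • A)).mulVec v) t := h2
  simpa [expM, ← Matrix.mulVec_mulVec] using h3

lemma tau_mono (δ : ℕ → ℝ) {N : ℕ} (hδ : ∀ q ≤ N, 0 ≤ δ q) {i j : ℕ} (hij : i ≤ j)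
    (hj : j ≤ N + 1) : tau δ i ≤ tau δ j := by
  have h : tau δ i + ∑ k ∈ Finset.Ico i j, δ k = tau δ j := by
    simp only [tau, Finset.range_eq_Ico]
    exact Finset.sum_Ico_consecutive _ (Nat.zero_le i) hij
  have h2 : 0 ≤ ∑ k ∈ Finset.Ico i j, δ k :=
    Finset.sum_nonneg fun k hk => hδ k (by have := Finset.mem_Ico.mp hk; omega)
  linarith

lemma tau_zero (δ : ℕ → ℝ) : tau δ 0 = 0 := by simp [tau]

lemma tau_succ (δ : ℕ → ℝ) (i : ℕ) : tau δ (i + 1) = tau δ i + δ i := by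
  simp [tau, Finset.sum_range_succ]

lemma traj_piece {n N : ℕ} {A : ℕ → Matrix (Fin n) (Fin n) ℝ} {δ : ℕ → ℝ}
    (hδ : ∀ q ≤ N, 0 ≤ δ q) {x0 : Fin n → ℝ} {x : ℝ → Fin n → ℝ}
    (hx : IsTrajectory N A δ x0 x) {i : ℕ} (hi : i ≤ N) :
    ∀ t ∈ Set.Icc (tau δ i) (tau δ (i + 1)),
      x t = (expM ((t - tau δ i) • A i)).mulVec (x (tau δ i)) := by
  set a := tau δ i with ha
  set b := tau δ (i + 1) with hb
  have hab : a ≤ b := tau_mono δ hδ (Nat.le_succ i) (by omega)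
  have h0a : (0 : ℝ) ≤ a := by
    have := tau_mono δ hδ (Nat.zero_le i) (by omega)
    simpa [tau_zero] using this
  have hbT : b ≤ tau δ (N + 1) := tau_mono δ hδ (by omega) le_rfl
  have hsub : Set.Icc a b ⊆ Set.Icc 0 (tau δ (N + 1)) := Set.Icc_subset_Icc h0a hbT
  rcases eq_or_lt_of_le hab with heqab | hlt
  · intro t ht
    have : t = a := le_antisymm (heqab ▸ ht.2) ht.1
    simp [this, expM_zero]
  · -- main case
    have hcontg : ∀ s : ℝ, Continuous fun t : ℝ => (expM ((t - s) • A i)).mulVec (x s) :=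
      fun s => Continuous.matrix_mulVec
        (continuous_expM.comp (by continuity)) continuous_const
    have key : ∀ s ∈ Set.Ioo a b,
        Set.EqOn x (fun t => (expM ((t - s) • A i)).mulVec (x s)) (Set.Icc a b) := by
      intro s hs
      refine ODE_solution_unique_of_mem_Icc
        (v := fun _ z => (A i).mulVec z) (s := fun _ => Set.univ)
        (K := ‖LinearMap.toContinuousLinearMap ((A i).mulVecLin)‖₊)
        (fun _ _ => LipschitzWith.lipschitzOnWith ?_) hs
        (hx.1.mono hsub) (fun t ht => hx.2.2 i hi t ht) (fun _ _ => Set.mem_univ _)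
        (hcontg s).continuousOn
        (fun t _ => hasDerivAt_expM_mulVec (A i) (x s) s t) (fun _ _ => Set.mem_univ _)
        (by simp [expM_zero])
      have hlip := (LinearMap.toContinuousLinearMap ((A i).mulVecLin)).lipschitz
      exact hlip
    intro t ht
    set F := fun s : ℝ => (expM ((t - s) • A i)).mulVec (x s) with hF
    have hxc : ContinuousWithinAt x (Set.Ioo a b) a :=
      ((hx.1.mono hsub) a ⟨le_rfl, hab⟩).mono Set.Ioo_subset_Icc_self
    have hFc : ContinuousWithinAt F (Set.Ioo a b) a := by
      have hm : Continuous fun p : Matrix (Fin n) (Fin n) ℝ × (Fin n → ℝ) =>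
          p.1.mulVec p.2 := Continuous.matrix_mulVec continuous_fst continuous_snd
      have hpair : ContinuousWithinAt
          (fun s : ℝ => (expM ((t - s) • A i), x s)) (Set.Ioo a b) a :=
        ContinuousWithinAt.prodMk
          ((continuous_expM.comp (by continuity)).continuousWithinAt) hxc
      exact hm.continuousAt.comp_continuousWithinAt hpair
    haveI := left_nhdsWithin_Ioo_neBot hlt
    have h1 : Filter.Tendsto F (nhdsWithin a (Set.Ioo a b)) (nhds (F a)) := hFc
    have h2 : Filter.Tendsto F (nhdsWithin a (Set.Ioo a b)) (nhds (x t)) := by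
      refine Filter.Tendsto.congr' ?_ tendsto_const_nhds
      filter_upwards [eventually_mem_nhdsWithin] with s hs
      exact key s hs ht
    have := tendsto_nhds_unique h2 h1
    simpa [hF] using this

lemma Phi_zero {n : ℕ} (A : ℕ → Matrix (Fin n) (Fin n) ℝ) (δ : ℕ → ℝ) :
    Phi A δ 0 0 = 1 := by simp [Phi]

lemma Phi_succ {n : ℕ} (A : ℕ → Matrix (Fin n) (Fin n) ℝ) (δ : ℕ → ℝ) (l : ℕ) :
    Phi A δ (l + 1) 0 = expM (δ l • A l) * Phi A δ l 0 := by
  simp [Phi, List.range_succ]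

lemma x_tau {n N : ℕ} {A : ℕ → Matrix (Fin n) (Fin n) ℝ} {δ : ℕ → ℝ}
    (hδ : ∀ q ≤ N, 0 ≤ δ q) {x0 : Fin n → ℝ} {x : ℝ → Fin n → ℝ}
    (hx : IsTrajectory N A δ x0 x) :
    ∀ i ≤ N + 1, x (tau δ i) = (Phi A δ i 0).mulVec x0 := by
  intro i
  induction i with
  | zero => intro _; simp [tau_zero, Phi_zero, hx.2.1]
  | succ i ih =>
    intro hi
    have hiN : i ≤ N := by omega
    have hmem : tau δ (i + 1) ∈ Set.Icc (tau δ i) (tau δ (i + 1)) :=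
      ⟨tau_mono δ hδ (Nat.le_succ i) (by omega), le_rfl⟩
    have h := traj_piece hδ hx hiN _ hmem
    rw [h, ih (by omega), Phi_succ, ← Matrix.mulVec_mulVec]
    rw [tau_succ]; ring_nf

lemma dot_conj {n : ℕ} (B M : Matrix (Fin n) (Fin n) ℝ) (v : Fin n → ℝ) :
    (B.mulVec v) ⬝ᵥ M.mulVec (B.mulVec v) = v ⬝ᵥ (Bᵀ * M * B).mulVec v := by
  rw [← Matrix.mulVec_mulVec, ← Matrix.mulVec_mulVec,
    Matrix.dotProduct_mulVec v Bᵀ, Matrix.vecMul_transpose]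

lemma integral_dot {n : ℕ} (v : Fin n → ℝ) (G : ℝ → Matrix (Fin n) (Fin n) ℝ)
    (hG : Continuous G) (c d : ℝ) :
    ∫ η in c..d, v ⬝ᵥ (G η).mulVec v
      = v ⬝ᵥ (Matrix.of fun k l => ∫ η in c..d, G η k l).mulVec v := by
  have hent : ∀ k l : Fin n, Continuous fun η => G η k l := fun k l =>
    (continuous_apply l).comp ((continuous_apply k).comp hG)
  simp only [dotProduct, Matrix.mulVec, Matrix.of_apply]
  rw [intervalIntegral.integral_finset_sum (f := fun k η => v k * ∑ l, G η k l * v l) (fun k _ =>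
    (continuous_const.mul (continuous_finset_sum _ fun l _ =>
      (hent k l).mul continuous_const)).intervalIntegrable _ _)]
  refine Finset.sum_congr rfl fun k _ => ?_
  rw [intervalIntegral.integral_const_mul,
    intervalIntegral.integral_finset_sum (f := fun l η => G η k l * v l) (fun l _ =>
      ((hent k l).mul continuous_const).intervalIntegrable _ _)]
  congr 1
  exact Finset.sum_congr rfl fun l _ => intervalIntegral.integral_mul_const _ _

lemma continuous_G {n : ℕ} (A0 Q : Matrix (Fin n) (Fin n) ℝ) :
    Continuous fun η : ℝ => (expM (η • A0))ᵀ * Q * expM (η • A0) := by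
  have h : Continuous fun η : ℝ => expM (η • A0) :=
    continuous_expM.comp (by continuity)
  exact (h.matrix_transpose.matrix_mul continuous_const).matrix_mul h

lemma interval_cost {n N : ℕ} {A : ℕ → Matrix (Fin n) (Fin n) ℝ} {δ : ℕ → ℝ}
    (hδ : ∀ q ≤ N, 0 ≤ δ q) (Q : Matrix (Fin n) (Fin n) ℝ) {x0 : Fin n → ℝ}
    {x : ℝ → Fin n → ℝ} (hx : IsTrajectory N A δ x0 x) {i : ℕ} (hi : i ≤ N) :
    ∫ t in (tau δ i)..(tau δ (i + 1)), x t ⬝ᵥ Q.mulVec (x t)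
      = (x (tau δ i)) ⬝ᵥ (Mmat A δ Q i).mulVec (x (tau δ i)) := by
  have hδi := hδ i hi
  have hcomp : ∫ t in (tau δ i)..(tau δ (i + 1)), x t ⬝ᵥ Q.mulVec (x t)
      = ∫ η in (0:ℝ)..(δ i), x (tau δ i + η) ⬝ᵥ Q.mulVec (x (tau δ i + η)) := by
    rw [intervalIntegral.integral_comp_add_left
      (fun t => x t ⬝ᵥ Q.mulVec (x t)) (tau δ i), add_zero, ← tau_succ]
  rw [hcomp]
  have hEq : Set.EqOn (fun η => x (tau δ i + η) ⬝ᵥ Q.mulVec (x (tau δ i + η)))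
      (fun η => (x (tau δ i)) ⬝ᵥ
        (((expM (η • A i))ᵀ * Q * expM (η • A i))).mulVec (x (tau δ i)))
      (Set.uIcc (0:ℝ) (δ i)) := by
    intro η hη
    rw [Set.uIcc_of_le hδi] at hη
    have hmem : tau δ i + η ∈ Set.Icc (tau δ i) (tau δ (i + 1)) := by
      rw [tau_succ]
      constructor <;> [linarith [hη.1]; linarith [hη.2]]
    have hxt := traj_piece hδ hx hi _ hmem
    rw [add_sub_cancel_left] at hxt
    simp only [hxt]
    exact dot_conj _ _ _
  rw [intervalIntegral.integral_congr hEq, integral_dot _ _ (continuous_G (A i) Q)]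
  rfl

lemma dot_sum {n : ℕ} {ι : Type*} (s : Finset ι) (W : ι → Matrix (Fin n) (Fin n) ℝ)
    (v : Fin n → ℝ) :
    v ⬝ᵥ (∑ q ∈ s, W q).mulVec v = ∑ q ∈ s, v ⬝ᵥ (W q).mulVec v := by
  have h1 : (∑ q ∈ s, W q).mulVec v = ∑ q ∈ s, (W q).mulVec v := map_sum (mulVecCLM v) _ _
  rw [h1]
  simp only [dotProduct, Finset.sum_apply, Finset.mul_sum]
  exact Finset.sum_comm

/-- Theorem 1(i): the cost `J = ∫_0^{τ_{N+1}} xᵀQx dt + x(τ_{N+1})ᵀ E x(τ_{N+1})`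
equals the quadratic function `x_0ᵀ S_0 x_0` of the initial state. -/
theorem stmt3 {n N : ℕ} (A : ℕ → Matrix (Fin n) (Fin n) ℝ) (δ : ℕ → ℝ)
    (hδ : ∀ q ≤ N, 0 ≤ δ q) (Q E : Matrix (Fin n) (Fin n) ℝ)
    (x0 : Fin n → ℝ) (x : ℝ → Fin n → ℝ) (hx : IsTrajectory N A δ x0 x) :
    (∫ t in (0:ℝ)..tau δ (N + 1), x t ⬝ᵥ Q.mulVec (x t)) +
        x (tau δ (N + 1)) ⬝ᵥ E.mulVec (x (tau δ (N + 1))) =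
      x0 ⬝ᵥ (Smat N A δ Q E 0).mulVec x0 := by
  have hcont : ContinuousOn (fun t => x t ⬝ᵥ Q.mulVec (x t)) (Set.Icc 0 (tau δ (N + 1))) := by
    have hq : Continuous fun w : Fin n → ℝ => w ⬝ᵥ Q.mulVec w :=
      Continuous.dotProduct continuous_id
        (Continuous.matrix_mulVec continuous_const continuous_id)
    exact hq.comp_continuousOn hx.1
  have hint : ∀ k < N + 1, IntervalIntegrable (fun t => x t ⬝ᵥ Q.mulVec (x t))
      MeasureTheory.volume (tau δ k) (tau δ (k + 1)) := by
    intro k hk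
    apply ContinuousOn.intervalIntegrable
    apply hcont.mono
    rw [Set.uIcc_of_le (tau_mono δ hδ (Nat.le_succ k) (by omega))]
    exact Set.Icc_subset_Icc
      (by simpa [tau_zero] using tau_mono δ hδ (Nat.zero_le k) (by omega))
      (tau_mono δ hδ (by omega) le_rfl)
  have hsplit := intervalIntegral.sum_integral_adjacent_intervals hint
  rw [tau_zero] at hsplit
  rw [← hsplit]
  have hterm : ∀ k ∈ Finset.range (N + 1),
      (∫ t in tau δ k..tau δ (k + 1), x t ⬝ᵥ Q.mulVec (x t))
        = x0 ⬝ᵥ ((Phi A δ k 0)ᵀ * Mmat A δ Q k * Phi A δ k 0).mulVec x0 := by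
    intro k hk
    have hkN : k ≤ N := Nat.lt_succ_iff.mp (Finset.mem_range.mp hk)
    rw [interval_cost hδ Q hx hkN, x_tau hδ hx k (by omega), dot_conj]
  rw [Finset.sum_congr rfl hterm, x_tau hδ hx (N + 1) le_rfl, dot_conj]
  have hIcc : Finset.Icc 0 N = Finset.range (N + 1) := by
    ext k; simp [Nat.lt_succ_iff]
  rw [Smat, Pmat, Fmat, Matrix.add_mulVec, dotProduct_add, hIcc, dot_sum]
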